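/- Let F be a field and let S be a finite generating system of the full matrix algebra M_n(F). If for some k ≥ 1 the subspace L_k(S) contains a matrix of rank r with r > 0, then ℓ(S) ≤ r·n + n − r + k − 1. -/

import Mathlib

open Polynomial Matrix

set_option maxHeartbeats 1600000

/-- The `F`-linear span of all words over `S` of length at most `i`
(the empty word being `1`). -/
def wordSpan (F : Type*) {A : Type*} [Field F] [Ring A] [Algebra F A]
    (S : Set A) (i : ℕ) : Submodule F A :=
  Submodule.span F {x : A | ∃ l : List A, l.length ≤ i ∧ (∀ a ∈ l, a ∈ S) ∧ l.prod = x}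

/-- `S` is a generating system of the algebra `A`:
`A` is the union of the subspaces `wordSpan F S i`. -/
def IsGeneratingSystem (F : Type*) {A : Type*} [Field F] [Ring A] [Algebra F A]
    (S : Set A) : Prop :=
  ∀ x : A, ∃ i : ℕ, x ∈ wordSpan F S i

/-- The length of a generating system `S`: the least `k` with `wordSpan F S k = ⊤`. -/
noncomputable def genLength (F : Type*) {A : Type*} [Field F] [Ring A] [Algebra F A]
    (S : Set A) : ℕ :=
  sInf {k : ℕ | wordSpan F S k = ⊤}

section Aux

variable {F : Type*} {A : Type*} [Field F] [Ring A] [Algebra F A] {S : Set A}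

lemma wordSpan_mono {i j : ℕ} (h : i ≤ j) : wordSpan F S i ≤ wordSpan F S j :=
  Submodule.span_mono (fun _x ⟨l, hl, hmem, hprod⟩ => ⟨l, hl.trans h, hmem, hprod⟩)

lemma word_mem_wordSpan {i : ℕ} {l : List A} (hl : l.length ≤ i) (hmem : ∀ a ∈ l, a ∈ S) :
    l.prod ∈ wordSpan F S i :=
  Submodule.subset_span ⟨l, hl, hmem, rfl⟩

lemma mul_mem_wordSpan {a b : ℕ} {x y : A}
    (hx : x ∈ wordSpan F S a) (hy : y ∈ wordSpan F S b) :
    x * y ∈ wordSpan F S (a + b) := by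
  induction hx using Submodule.span_induction with
  | mem x hxw =>
    obtain ⟨l, hl, hlmem, rfl⟩ := hxw
    induction hy using Submodule.span_induction with
    | mem y hyw =>
      obtain ⟨l', hl', hlmem', rfl⟩ := hyw
      rw [← List.prod_append]
      exact word_mem_wordSpan (by simpa using Nat.add_le_add hl hl')
        (by intro a ha; rcases List.mem_append.1 ha with h | h
            exacts [hlmem a h, hlmem' a h])
    | zero => simpa using Submodule.zero_mem _
    | add y z _ _ hy hz => simpa [mul_add] using Submodule.add_mem _ hy hz
    | smul c y _ hy => simpa [mul_smul_comm] using Submodule.smul_mem _ c hy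
  | zero => simpa using Submodule.zero_mem _
  | add x z _ _ hx hz => simpa [add_mul] using Submodule.add_mem _ hx hz
  | smul c x _ hx => simpa [smul_mul_assoc] using Submodule.smul_mem _ c hx

lemma one_mem_wordSpan {i : ℕ} : (1 : A) ∈ wordSpan F S i := by
  simpa using word_mem_wordSpan (F := F) (S := S) (l := []) (by simp) (by simp) (i := i)

lemma wordSpan_zero : wordSpan F S 0 = Submodule.span F {(1 : A)} := by
  unfold wordSpan
  congr 1
  ext x
  constructor
  · rintro ⟨l, hl, -, rfl⟩
    rw [List.length_eq_zero_iff.mp (Nat.le_zero.mp hl)]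
    simp
  · rintro rfl
    exact ⟨[], by simp, by simp, by simp⟩

lemma wordSpan_succ_le_left (i : ℕ) :
    wordSpan F S (i + 1) ≤
      wordSpan F S i ⊔ ⨆ s ∈ S, Submodule.map (LinearMap.mulLeft F s) (wordSpan F S i) := by
  rw [wordSpan, Submodule.span_le]
  rintro x ⟨l, hl, hmem, rfl⟩
  cases l with
  | nil => exact Submodule.mem_sup_left one_mem_wordSpan
  | cons a t =>
    refine Submodule.mem_sup_right ?_
    have ht : t.prod ∈ wordSpan F S i :=
      word_mem_wordSpan (by simpa using hl) (fun b hb => hmem b (List.mem_cons_of_mem _ hb))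
    have : a * t.prod ∈ Submodule.map (LinearMap.mulLeft F a) (wordSpan F S i) :=
      ⟨t.prod, ht, rfl⟩
    rw [List.prod_cons]
    exact Submodule.mem_iSup_of_mem a (Submodule.mem_iSup_of_mem (hmem a (by simp)) this)

lemma wordSpan_succ_le_right (i : ℕ) :
    wordSpan F S (i + 1) ≤
      wordSpan F S i ⊔ ⨆ s ∈ S, Submodule.map (LinearMap.mulRight F s) (wordSpan F S i) := by
  rw [wordSpan, Submodule.span_le]
  rintro x ⟨l, hl, hmem, rfl⟩
  rcases List.eq_nil_or_concat l with rfl | ⟨t, a, rfl⟩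
  · exact Submodule.mem_sup_left one_mem_wordSpan
  · refine Submodule.mem_sup_right ?_
    have ht : t.prod ∈ wordSpan F S i :=
      word_mem_wordSpan (by simpa using hl) (fun b hb => hmem b (by simp [hb]))
    have : t.prod * a ∈ Submodule.map (LinearMap.mulRight F a) (wordSpan F S i) :=
      ⟨t.prod, ht, rfl⟩
    rw [List.concat_eq_append, List.prod_append, List.prod_cons, List.prod_nil, mul_one]
    exact Submodule.mem_iSup_of_mem a (Submodule.mem_iSup_of_mem (hmem a (by simp)) this)

/-- Generic reaching lemma: a monotone sequence of submodules contained in `G`, which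
equals `G` as soon as it stabilizes, reaches `G` in `d` steps when
`finrank G ≤ finrank (f 0) + d`. -/
lemma reach_target {V : Type*} [AddCommGroup V] [Module F V] [FiniteDimensional F V]
    (f : ℕ → Submodule F V) (G : Submodule F V)
    (hmono : ∀ j, f j ≤ f (j + 1))
    (hle : ∀ j, f j ≤ G)
    (hstab : ∀ j, f (j + 1) ≤ f j → f (j + 2) ≤ f (j + 1))
    (hfull : ∀ j, (∀ i, f i ≤ f j) → G ≤ f j)
    (d : ℕ) (hd : Module.finrank F G ≤ Module.finrank F (f 0) + d) :
    f d = G := by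
  have hmono' : ∀ {i j}, i ≤ j → f i ≤ f j := by
    intro i j hij
    induction hij with
    | refl => exact le_rfl
    | step _ ih => exact ih.trans (hmono _)
  have key : ∀ j, f j = G ∨ Module.finrank F (f 0) + j ≤ Module.finrank F (f j) := by
    intro j
    induction j with
    | zero => right; simp
    | succ j ih =>
      have hjG : f j = G → f (j + 1) = G := by
        intro h
        exact le_antisymm (hle _) (h ▸ hmono j)
      rcases ih with h | h
      · exact Or.inl (hjG h)
      · by_cases hc : f (j + 1) ≤ f j
        · left
          apply hjG
          refine le_antisymm (hle _) (hfull _ ?_)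
          have hstep : ∀ m, f (j + m + 1) ≤ f (j + m) := by
            intro m
            induction m with
            | zero => exact hc
            | succ m ih2 => exact hstab _ ih2
          have hstable : ∀ m, f (j + m) ≤ f j := by
            intro m
            induction m with
            | zero => exact le_rfl
            | succ m ih2 => exact (hstep m).trans ih2
          intro i
          rcases le_or_gt i j with hij | hij
          · exact hmono' hij
          · have : i = j + (i - j) := by omega
            rw [this]
            exact hstable _
        · have hlt : f j < f (j + 1) := lt_of_le_of_ne (hmono j) (fun e => hc (e ▸ le_rfl))
          right
          have := Submodule.finrank_lt_finrank_of_lt hlt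
          omega
  rcases key d with h | h
  · exact h
  · exact Submodule.eq_of_le_of_finrank_le (hle d) (hd.trans h)

end Aux

theorem length_le_of_rank_r_in_Lk
    (F : Type*) [Field F] (n : ℕ)
    (S : Finset (Matrix (Fin n) (Fin n) F))
    (hgen : IsGeneratingSystem F (S : Set (Matrix (Fin n) (Fin n) F)))
    (k r : ℕ) (hk : 1 ≤ k) (hr : 0 < r)
    (M : Matrix (Fin n) (Fin n) F)
    (hM : M ∈ wordSpan F (S : Set (Matrix (Fin n) (Fin n) F)) k)
    (hrank : M.rank = r) :
    genLength F (S : Set (Matrix (Fin n) (Fin n) F)) ≤ r * n + n - r + k - 1 := by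
  classical
  set 𝕊 : Set (Matrix (Fin n) (Fin n) F) := (S : Set (Matrix (Fin n) (Fin n) F))
  set L : ℕ → Submodule F (Matrix (Fin n) (Fin n) F) := fun i => wordSpan F 𝕊 i with hL
  -- basic numerics
  have hrn : r ≤ n := hrank ▸ M.rank_le_width
  have hn : 1 ≤ n := le_trans hr hrn
  have hM0 : M ≠ 0 := by
    rintro rfl
    rw [Matrix.rank_zero] at hrank
    omega
  -- the row space of M
  set W : Submodule F (Fin n → F) := LinearMap.range M.vecMulLinear with hWdef
  have hrowW : ∀ (v : Fin n → F), v ᵥ* M ∈ W := fun v => ⟨v, rfl⟩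
  have hWrow : ∀ i, M i ∈ W := by
    intro i
    refine ⟨Pi.single i 1, ?_⟩
    funext q
    simp [Matrix.vecMulLinear_apply, Matrix.vecMul, dotProduct, Pi.single_apply]
  have hfinW : Module.finrank F W = r := by
    rw [hWdef, ← Matrix.mulVecLin_transpose]
    rw [show Module.finrank F (LinearMap.range (Matrix.mulVecLin Mᵀ)) = Mᵀ.rank from rfl,
      Matrix.rank_transpose, hrank]
  -- the module of matrices all of whose rows lie in W, as a range
  set f : (Fin n → W) →ₗ[F] Matrix (Fin n) (Fin n) F :=
    { toFun := fun g => Matrix.of fun i => (g i : Fin n → F)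
      map_add' := by intros; ext i j; simp
      map_smul' := by intros; ext i j; simp } with hfdef
  set G : Submodule F (Matrix (Fin n) (Fin n) F) := LinearMap.range f with hGdef
  have hmemG : ∀ B : Matrix (Fin n) (Fin n) F, B ∈ G ↔ ∀ i, B i ∈ W := by
    intro B
    constructor
    · rintro ⟨g, rfl⟩ i
      exact (g i).2
    · intro h
      exact ⟨fun i => ⟨B i, h i⟩, rfl⟩
  have hrowProd : ∀ (X : Matrix (Fin n) (Fin n) F) (i : Fin n), (X * M) i = (X i) ᵥ* M := by
    intro X i
    funext q
    simp [Matrix.mul_apply, Matrix.vecMul, dotProduct]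
  -- Phase 1: T j = L j * M
  set T : ℕ → Submodule F (Matrix (Fin n) (Fin n) F) :=
    fun j => Submodule.map (LinearMap.mulRight F M) (L j) with hTdef
  have hTle : ∀ j, T j ≤ G := by
    intro j
    rw [Submodule.map_le_iff_le_comap]
    intro x _
    refine (hmemG _).2 (fun i => ?_)
    rw [LinearMap.mulRight_apply, hrowProd]
    exact hrowW _
  have hTmono : ∀ j, T j ≤ T (j + 1) :=
    fun j => Submodule.map_mono (wordSpan_mono (Nat.le_succ j))
  have hmulLeft_T : ∀ s ∈ 𝕊, ∀ j,
      Submodule.map (LinearMap.mulLeft F s) (T j) ≤ T (j + 1) := by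
    intro s hs j
    rw [hTdef, Submodule.map_le_iff_le_comap]
    rintro x ⟨y, hy, rfl⟩
    refine ⟨s * y, ?_, ?_⟩
    · have hsy : s * y ∈ wordSpan F 𝕊 (1 + j) :=
        mul_mem_wordSpan (by simpa using word_mem_wordSpan (l := [s]) (by simp) (by simpa)) hy
      simpa [hL, Nat.add_comm] using hsy
    · simp [LinearMap.mulRight_apply, LinearMap.mulLeft_apply, mul_assoc]
  have hTsucc : ∀ j, T (j + 1) ≤ T j ⊔ ⨆ s ∈ 𝕊, Submodule.map (LinearMap.mulLeft F s) (T j) := by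
    intro j
    rw [hTdef]
    calc Submodule.map (LinearMap.mulRight F M) (L (j + 1))
        ≤ Submodule.map (LinearMap.mulRight F M)
            (L j ⊔ ⨆ s ∈ 𝕊, Submodule.map (LinearMap.mulLeft F s) (L j)) :=
          Submodule.map_mono (wordSpan_succ_le_left j)
      _ ≤ _ := by
          rw [Submodule.map_sup]
          refine sup_le_sup le_rfl ?_
          rw [Submodule.map_iSup]
          refine iSup_le fun s => ?_
          rw [Submodule.map_iSup]
          refine iSup_le fun hs => ?_
          refine le_trans ?_ (le_iSup_of_le s (le_iSup_of_le hs le_rfl))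
          rw [← Submodule.map_comp, ← Submodule.map_comp]
          refine le_of_eq ?_
          congr 1
          ext x
          simp [LinearMap.mulRight_apply, LinearMap.mulLeft_apply, mul_assoc]
  have hTstab : ∀ j, T (j + 1) ≤ T j → T (j + 2) ≤ T (j + 1) := by
    intro j h
    refine (hTsucc (j + 1)).trans (sup_le (le_rfl) ?_)
    refine iSup_le fun s => iSup_le fun hs => ?_
    exact le_trans (Submodule.map_mono h) (hmulLeft_T s hs j)
  have hTfull : ∀ j, (∀ i, T i ≤ T j) → G ≤ T j := by
    intro j hst
    rintro B hB
    have hB' := (hmemG B).1 hB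
    choose c hc using fun i => hB' i
    obtain ⟨t, hC⟩ := hgen (Matrix.of c)
    have : B = (Matrix.of c) * M := by
      ext i q
      rw [hrowProd]
      have := congrFun (hc i) q
      exact (by simpa [Matrix.vecMulLinear_apply] using this.symm : B i q = (c i ᵥ* M) q)
    rw [this]
    exact hst t ⟨Matrix.of c, hC, rfl⟩
  have hT0 : T 0 = Submodule.span F {M} := by
    show Submodule.map (LinearMap.mulRight F M) (wordSpan F 𝕊 0) = _
    rw [wordSpan_zero, Submodule.map_span]
    simp
  have hfinG : Module.finrank F G ≤ n * r := by
    have h1 : Module.finrank F G ≤ Module.finrank F (Fin n → W) :=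
      LinearMap.finrank_range_le f
    have h2 : Module.finrank F (Fin n → W) = n * r := by
      rw [Module.finrank_pi_fintype]
      simp [hfinW, Finset.sum_const, Fintype.card_fin, Nat.mul_comm]
    omega
  have hT : T (n * r - 1) = G := by
    refine reach_target T G hTmono hTle hTstab hTfull _ ?_
    rw [hT0, finrank_span_singleton hM0]
    have : 1 ≤ n * r := Nat.one_le_iff_ne_zero.2 (by positivity)
    omega
  -- G sits inside L (n*r - 1 + k)
  have hGL : G ≤ L (n * r - 1 + k) := by
    rw [← hT, hTdef, Submodule.map_le_iff_le_comap]
    intro x hx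
    exact mul_mem_wordSpan hx hM
  -- Phase 2 : row spaces of M * L s
  set vp : Fin n → Matrix (Fin n) (Fin n) F →ₗ[F] (Fin n → F) := fun i =>
    { toFun := fun Y => (M i) ᵥ* Y
      map_add' := fun Y Z => Matrix.vecMul_add Y Z (M i)
      map_smul' := fun c Y => by
        funext q
        simp only [Matrix.vecMul, dotProduct, Matrix.smul_apply, Pi.smul_apply,
          smul_eq_mul, RingHom.id_apply]
        rw [Finset.mul_sum]
        exact Finset.sum_congr rfl fun p _ => by ring } with hvpdef
  set R : ℕ → Submodule F (Fin n → F) := fun s => ⨆ i : Fin n, Submodule.map (vp i) (L s)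
    with hRdef
  have hRmono : ∀ s, R s ≤ R (s + 1) :=
    fun s => iSup_mono fun i => Submodule.map_mono (wordSpan_mono (Nat.le_succ s))
  have hvmr : ∀ t ∈ 𝕊, ∀ s,
      Submodule.map t.vecMulLinear (R s) ≤ R (s + 1) := by
    intro t ht s
    rw [hRdef, Submodule.map_iSup]
    refine iSup_le fun i => le_trans ?_ (le_iSup_of_le i le_rfl)
    rw [← Submodule.map_comp, Submodule.map_le_iff_le_comap]
    intro Y hY
    refine ⟨Y * t, ?_, ?_⟩
    · have := mul_mem_wordSpan (a := s) (b := 1) hY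
        (word_mem_wordSpan (l := [t]) (by simp) (by simpa))
      simpa using this
    · simp [hvpdef, Matrix.vecMulLinear_apply, Matrix.vecMul_vecMul]
  have hRstab : ∀ s, R (s + 1) ≤ R s → R (s + 2) ≤ R (s + 1) := by
    intro s h
    have hsucc : R (s + 2) ≤ R (s + 1) ⊔ ⨆ t ∈ 𝕊, Submodule.map t.vecMulLinear (R (s + 1)) := by
      rw [hRdef]
      refine iSup_le fun i => ?_
      refine le_trans (Submodule.map_mono (wordSpan_succ_le_right (s + 1))) ?_
      rw [Submodule.map_sup]
      refine sup_le (le_trans (le_iSup_of_le i le_rfl) le_sup_left) ?_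
      · rw [Submodule.map_iSup]
        refine iSup_le fun t => ?_
        rw [Submodule.map_iSup]
        refine iSup_le fun htS => ?_
        refine le_trans ?_ (le_sup_right)
        refine le_trans ?_ (le_iSup_of_le t (le_iSup_of_le htS le_rfl))
        rw [← Submodule.map_comp]
        have hcomp : ∀ Y : Matrix (Fin n) (Fin n) F,
            (vp i) (Y * t) = t.vecMulLinear ((vp i) Y) := by
          intro Y
          simp [hvpdef, Matrix.vecMulLinear_apply, Matrix.vecMul_vecMul]
        have : Submodule.map ((vp i).comp (LinearMap.mulRight F t)) (L (s + 1)) ≤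
            Submodule.map t.vecMulLinear (Submodule.map (vp i) (L (s + 1))) := by
          rw [← Submodule.map_comp]
          refine le_of_eq ?_
          congr 1
          ext Y x
          simp [hcomp, Matrix.vecMulLinear_apply]
        refine this.trans (Submodule.map_mono (le_iSup_of_le i le_rfl))
    refine hsucc.trans (sup_le le_rfl ?_)
    refine iSup_le fun t => iSup_le fun htS => ?_
    exact le_trans (Submodule.map_mono h) (hvmr t htS s)
  have hRfull : ∀ s, (∀ i, R i ≤ R s) → ⊤ ≤ R s := by
    intro s hst
    obtain ⟨i0, j0, hij⟩ : ∃ i j, M i j ≠ 0 := by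
      by_contra h
      push_neg at h
      exact hM0 (by ext i j; simp [h])
    have hsingle : ∀ l : Fin n, Pi.single l (1 : F) ∈ R s := by
      intro l
      set Y : Matrix (Fin n) (Fin n) F := (M i0 j0)⁻¹ • Matrix.single j0 l 1 with hYdef
      obtain ⟨t, hY⟩ := hgen Y
      have hval : (vp i0) Y = Pi.single l 1 := by
        funext q
        simp only [hvpdef, hYdef, LinearMap.coe_mk, AddHom.coe_mk]
        simp only [Matrix.vecMul, dotProduct, Matrix.smul_apply, smul_eq_mul,
          Matrix.single, Matrix.of_apply]
        rw [Finset.sum_eq_single j0]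
        · by_cases hq : q = l
          · subst hq
            simp [Pi.single_apply, mul_inv_cancel₀ hij, inv_mul_cancel₀ hij]
          · have hq' : ¬ l = q := fun h => hq h.symm
            simp [hq, hq', Pi.single_apply]
        · intro b _ hb; simp [Ne.symm hb]
        · simp
      have : Pi.single l (1 : F) ∈ R t := by
        rw [← hval]
        exact Submodule.mem_iSup_of_mem i0 ⟨Y, hY, rfl⟩
      exact hst t this
    intro w _
    have : w = ∑ l : Fin n, Pi.single l (w l) := by
      rw [Finset.univ_sum_single]
    rw [this]
    refine Submodule.sum_mem _ fun l _ => ?_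
    have : Pi.single l (w l) = w l • (Pi.single l (1 : F) : Fin n → F) := by
      funext q
      by_cases hq : q = l
      · subst hq; simp
      · simp [Pi.single_eq_of_ne hq]
    rw [this]
    exact Submodule.smul_mem _ _ (hsingle l)
  have hR0 : R 0 = W := by
    have h1 : ∀ i, Submodule.map (vp i) (L 0) = Submodule.span F {M i} := by
      intro i
      show Submodule.map (vp i) (wordSpan F 𝕊 0) = _
      rw [wordSpan_zero, Submodule.map_span]
      congr 1
      simp [hvpdef, Matrix.vecMul_one]
    show (⨆ i, Submodule.map (vp i) (L 0)) = W
    rw [hWdef, range_vecMulLinear]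
    simp_rw [h1]
    exact (Submodule.span_range_eq_iSup (v := M.row)).symm
  have hR : R (n - r) = ⊤ := by
    refine reach_target R ⊤ hRmono (fun _ => le_top) hRstab hRfull _ ?_
    rw [hR0, hfinW]
    have : Module.finrank F (⊤ : Submodule F (Fin n → F)) = n := by
      rw [finrank_top, Module.finrank_pi, Fintype.card_fin]
    omega
  -- Assemble
  have hfinal : L (n * r - 1 + k + (n - r)) = ⊤ := by
    rw [eq_top_iff]
    intro B _
    -- single-row embedding
    set ρ : Fin n → (Fin n → F) →ₗ[F] Matrix (Fin n) (Fin n) F := fun i =>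
      { toFun := fun w => Matrix.of fun p q => if p = i then w q else 0
        map_add' := by intros; ext p q; dsimp; split <;> simp
        map_smul' := by intros; ext p q; dsimp; split <;> simp } with hρdef
    have hrow : ∀ (i : Fin n) (s : ℕ),
        Submodule.map (ρ i) (R s) ≤ L (n * r - 1 + k + s) := by
      intro i s
      rw [hRdef, Submodule.map_iSup]
      refine iSup_le fun i' => ?_
      rw [← Submodule.map_comp, Submodule.map_le_iff_le_comap]
      intro Y hY
      have key : (ρ i) ((vp i') Y) = (ρ i) (M i') * Y := by
        ext p q
        simp only [hρdef, hvpdef, LinearMap.coe_mk, AddHom.coe_mk, Matrix.of_apply,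
          Matrix.mul_apply, Matrix.vecMul, dotProduct]
        split
        · rfl
        · simp
      have hmem1 : (ρ i) (M i') ∈ L (n * r - 1 + k) := by
        refine hGL ?_
        refine (hmemG _).2 fun p => ?_
        by_cases hp : p = i
        · have : ((ρ i) (M i')) p = M i' := by
            funext q; simp [hρdef, hp]
          rw [this]; exact hWrow i'
        · have : ((ρ i) (M i')) p = 0 := by
            funext q; simp [hρdef, hp]
          rw [this]; exact Submodule.zero_mem _
      have : (ρ i) ((vp i') Y) ∈ L (n * r - 1 + k + s) := by
        rw [key]
        exact mul_mem_wordSpan hmem1 hY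
      simpa using this
    have hBsum : B = ∑ i : Fin n, (ρ i) (B i) := by
      ext p q
      rw [Matrix.sum_apply]
      simp [hρdef, Finset.sum_ite_eq]
    rw [hBsum]
    refine Submodule.sum_mem _ fun i _ => ?_
    exact hrow i (n - r) ⟨B i, hR ▸ Submodule.mem_top, rfl⟩
  -- conclude
  have hmem : (n * r - 1 + k + (n - r)) ∈ {m : ℕ | wordSpan F 𝕊 m = ⊤} := hfinal
  have hsinf : genLength F 𝕊 ≤ n * r - 1 + k + (n - r) := Nat.sInf_le hmem
  have hone : 1 ≤ n * r := Nat.one_le_iff_ne_zero.2 (by positivity)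
  have : n * r = r * n := Nat.mul_comm n r
  omega
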